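/- arXiv:2207.08214 — 4 statements merged into one kernel-verified Lean document; each statement's English description precedes it below -/
import Mathlib

section
/- Let Φ be the 24×24 block matrix diag(Φ_I, I_9) where Φ_I is a 15×15 matrix, and let N = (0, 0, 0, 0, I_3, I_3, I_3, I_3)^T ∈ R^{24×3} (blocks of size 3). If the ranging measurement Jacobian H_u at any time has block rows of the form [Γ₁, Γ₂, Γ₃, Γ₄, −ζ, 0, ζ, 0], [Γ₁', Γ₂', Γ₃', Γ₄', −ζ', 0, 0, ζ'], and [0,0,0,0,0,0, Λ, −Λ] for row vectors ζ, ζ', Λ ∈ R^{1×3}, then H_u Φ N = 0. -/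
open Matrix

/-- Let `Φ = diag(Φ_I, I₉)` (in 3×3 blocks, `Φ_I` being the 15×15 IMU block whose
translation block column is `(0,0,0,0,I₃)ᵀ`), and `N = (0,0,0,0,I₃,I₃,I₃,I₃)ᵀ`.
If the ranging Jacobian `H_u` has block rows `[Γ₁,Γ₂,Γ₃,Γ₄,−ζ,0,ζ,0]`,
`[Γ₁',Γ₂',Γ₃',Γ₄',−ζ',0,0,ζ']` and `[0,0,0,0,0,0,Λ,−Λ]`, then `H_u Φ N = 0`. -/
theorem stmt7
    (Φblk : Fin 5 → Fin 5 → Matrix (Fin 3) (Fin 3) ℝ)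
    (hcol : ∀ a : Fin 5, Φblk a 4 = if a = 4 then 1 else 0)
    (Γ Γ' : Fin 4 → (Fin 3 → ℝ)) (ζ ζ' Λ : Fin 3 → ℝ) :
    -- the 24×24 block transition matrix Φ = diag(Φ_I, I₉)
    let Φ : Fin 8 → Fin 8 → Matrix (Fin 3) (Fin 3) ℝ := fun a b =>
      if ha : (a : ℕ) < 5 then
        (if hb : (b : ℕ) < 5 then Φblk ⟨a, ha⟩ ⟨b, hb⟩ else 0)
      else (if a = b then 1 else 0)
    -- the translation null-space directions N = (0,0,0,0,I,I,I,I)ᵀ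
    let N : Fin 8 → Matrix (Fin 3) (Fin 3) ℝ := fun b => if 4 ≤ (b : ℕ) then 1 else 0
    -- the three block rows of H_u
    let row1 : Fin 8 → (Fin 3 → ℝ) := ![Γ 0, Γ 1, Γ 2, Γ 3, -ζ, 0, ζ, 0]
    let row2 : Fin 8 → (Fin 3 → ℝ) := ![Γ' 0, Γ' 1, Γ' 2, Γ' 3, -ζ', 0, 0, ζ']
    let row3 : Fin 8 → (Fin 3 → ℝ) := ![0, 0, 0, 0, 0, 0, Λ, -Λ]
    -- block product (row · Φ) · N
    let prod : (Fin 8 → (Fin 3 → ℝ)) → (Fin 3 → ℝ) := fun r =>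
      ∑ b : Fin 8, ((∑ a : Fin 8, (r a) ᵥ* (Φ a b)) ᵥ* (N b))
    prod row1 = 0 ∧ prod row2 = 0 ∧ prod row3 = 0 := by
  intro Φ N row1 row2 row3 prod
  have hΦ4 : ∀ a : Fin 8, Φ a 4 = if a = 4 then 1 else 0 := by
    intro a; fin_cases a <;>
      simp (config := { decide := true }) [Φ, hcol,
        show ((4:Fin 8):ℕ) = 4 from rfl,
        show (⟨4, by norm_num⟩ : Fin 5) = 4 from rfl]
  have hΦI : ∀ a b : Fin 8, 5 ≤ (b : ℕ) → Φ a b = if a = b then 1 else 0 := by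
    intro a b hb; fin_cases b <;> simp at hb <;> fin_cases a <;>
      simp (config := { decide := true }) [Φ]
  have hN0 : ∀ b : Fin 8, (b : ℕ) < 4 → N b = 0 := by
    intro b hb; simp [N, Nat.not_le.2 hb]
  have hN1 : ∀ b : Fin 8, 4 ≤ (b : ℕ) → N b = 1 := by
    intro b hb; simp [N, hb]
  have key : ∀ r : Fin 8 → (Fin 3 → ℝ), prod r = r 4 + r 5 + r 6 + r 7 := by
    intro r
    show (∑ b : Fin 8, ((∑ a : Fin 8, (r a) ᵥ* (Φ a b)) ᵥ* (N b))) = _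
    rw [Fin.sum_univ_eight]
    rw [hN0 0 (by decide), hN0 1 (by decide), hN0 2 (by decide),
        hN0 3 (by decide), hN1 4 (by decide), hN1 5 (by decide),
        hN1 6 (by decide), hN1 7 (by decide)]
    simp only [Matrix.vecMul_zero, Matrix.vecMul_one, zero_add, add_zero]
    rw [show (5:Fin 8) = (5:Fin 8) from rfl]
    conv_lhs => ext i; rw [Fin.sum_univ_eight, Fin.sum_univ_eight,
      Fin.sum_univ_eight, Fin.sum_univ_eight]
    simp (config := { decide := true }) only [hΦ4,
      hΦI _ 5 (by decide), hΦI _ 6 (by decide), hΦI _ 7 (by decide),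
      Matrix.vecMul_zero, Matrix.vecMul_one, zero_add, add_zero, if_true, if_false]

  refine ⟨?_, ?_, ?_⟩ <;> rw [key]
  · show -ζ + 0 + ζ + 0 = 0; abel
  · show -ζ' + 0 + 0 + ζ' = 0; abel
  · show (0:Fin 3 → ℝ) + 0 + Λ + -Λ = 0; abel
end

section
/- Let the ideal VIRO null space N₂ = (R₁ g, 0, −⌊v₁×⌋g, 0, −⌊p₁×⌋g, −⌊p_f×⌋g, −⌊p_{a1}×⌋g, −⌊p_{a2}×⌋g) with blocks in R^3, where R₁ ∈ SO(3). Suppose the IMU state transition satisfies Φ₅₁ R₁ g = ⌊p₁ + (k−1)δ v₁ − ((k−1)δ)²/2 g − p_k ×⌋ g, Φ₅₂-terms vanish on 0, Φ₅₃ = (k−1)δ I. Then the ranging block row [ζ·R_k^T⌊q×⌋Φ₁₁, ζ·R_k^T⌊q×⌋Φ₁₂ − ζΦ₅₂ , −ζΦ₅₃, −ζΦ₅₄, −ζ, 0, ζ, 0] applied to N₂ evaluates to ζ ⌊(R_k^T q + p_k − p_{a1})×⌋ g, which is zero when ζ = −2(R_k^T q + p_k − p_{a1})^T. -/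
open Matrix


lemma rows_mul_transpose (R : Matrix (Fin 3) (Fin 3) ℝ) (u v w : Fin 3 → ℝ) :
    (Matrix.of ![u, v, w]) * Rᵀ = Matrix.of ![R *ᵥ u, R *ᵥ v, R *ᵥ w] := by
  ext i j
  fin_cases i <;>
    simp [Matrix.mul_apply, Matrix.mulVec, dotProduct, Fin.sum_univ_three, mul_comm]

lemma rot_cross (R : Matrix (Fin 3) (Fin 3) ℝ)
    (hR : R ∈ Matrix.specialOrthogonalGroup (Fin 3) ℝ) (a b : Fin 3 → ℝ) :
    Rᵀ *ᵥ (crossProduct a (R *ᵥ b)) = crossProduct (Rᵀ *ᵥ a) b := by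
  rw [Matrix.mem_specialOrthogonalGroup_iff] at hR
  obtain ⟨horth, hdet⟩ := hR
  rw [Matrix.mem_orthogonalGroup_iff] at horth
  have hRRT : R *ᵥ (Rᵀ *ᵥ a) = a := by
    rw [Matrix.mulVec_mulVec]
    rw [show R * Rᵀ = 1 from by simpa [Matrix.star_eq_conjTranspose] using horth]
    simp
  funext i
  have h1 : (Rᵀ *ᵥ (crossProduct a (R *ᵥ b))) i
      = (R *ᵥ Pi.single i 1) ⬝ᵥ crossProduct a (R *ᵥ b) := by
    rw [show (Rᵀ *ᵥ (crossProduct a (R *ᵥ b))) i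
        = Pi.single i 1 ⬝ᵥ (Rᵀ *ᵥ (crossProduct a (R *ᵥ b))) from by
      rw [single_dotProduct, one_mul],
      Matrix.dotProduct_mulVec, Matrix.vecMul_transpose]
  have h2 : (crossProduct (Rᵀ *ᵥ a) b) i
      = (Pi.single i 1 : Fin 3 → ℝ) ⬝ᵥ crossProduct (Rᵀ *ᵥ a) b := by
    rw [single_dotProduct, one_mul]
  rw [h1, h2, triple_product_eq_det, triple_product_eq_det]
  have key : Matrix.of ![(Pi.single i 1 : Fin 3 → ℝ), Rᵀ *ᵥ a, b] * Rᵀ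
      = Matrix.of ![R *ᵥ Pi.single i 1, a, R *ᵥ b] := by
    rw [rows_mul_transpose, hRRT]
  have := congrArg Matrix.det key
  rw [Matrix.det_mul, Matrix.det_transpose, hdet, mul_one] at this
  rw [show (![R *ᵥ Pi.single i 1, a, R *ᵥ b] : Matrix (Fin 3) (Fin 3) ℝ)
        = Matrix.of ![R *ᵥ Pi.single i 1, a, R *ᵥ b] from rfl,
      ← this]
  rfl


/-- Core computation of Theorem 1 (ideal observability of VIRO).
With the ideal null-space direction
`N₂ = (R₁ g, 0, −⌊v₁×⌋g, 0, −⌊p₁×⌋g, −⌊p_f×⌋g, −⌊p_{a1}×⌋g, −⌊p_{a2}×⌋g)`,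
state-transition identities `Φ₁₁ R₁ = R_k`, `Φ₅₃ = (k−1)δ I` and
`Φ₅₁ R₁ g = ⌊p₁ + (k−1)δ v₁ − ((k−1)δ)²/2 g − p_k ×⌋ g`, the ranging block row
`[ζ R_kᵀ⌊q×⌋Φ₁₁ − ζΦ₅₁, ζ R_kᵀ⌊q×⌋Φ₁₂ − ζΦ₅₂, −ζΦ₅₃, −ζΦ₅₄, −ζ, 0, ζ, 0]`
applied to `N₂` evaluates to `ζ ⌊(R_kᵀ q + p_k − p_{a1})×⌋ g`, which is zero when
`ζ = −2(R_kᵀ q + p_k − p_{a1})ᵀ`. -/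
theorem stmt14
    (R1 Rk : Matrix (Fin 3) (Fin 3) ℝ)
    (hR1 : R1 ∈ Matrix.specialOrthogonalGroup (Fin 3) ℝ)
    (hRk : Rk ∈ Matrix.specialOrthogonalGroup (Fin 3) ℝ)
    (Φ11 Φ12 Φ51 Φ52 Φ53 Φ54 : Matrix (Fin 3) (Fin 3) ℝ)
    (q g v1 p1 pk pf pa1 pa2 ζ : Fin 3 → ℝ)
    (k : ℕ) (δ : ℝ)
    (hΦ11 : Φ11 * R1 = Rk)
    (hΦ51 : Φ51 *ᵥ (R1 *ᵥ g) =
      crossProduct (p1 + (((k : ℝ) - 1) * δ) • v1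
        - ((((k : ℝ) - 1) * δ) ^ 2 / 2) • g - pk) g)
    (hΦ53 : Φ53 = (((k : ℝ) - 1) * δ) • (1 : Matrix (Fin 3) (Fin 3) ℝ)) :
    -- the ranging block row of the observability matrix applied to N₂
    let M : ℝ :=
      -- (ζ R_kᵀ⌊q×⌋Φ₁₁ − ζΦ₅₁) · (R₁ g)
      (ζ ⬝ᵥ (Rkᵀ *ᵥ crossProduct q (Φ11 *ᵥ (R1 *ᵥ g)))
        - ζ ⬝ᵥ (Φ51 *ᵥ (R1 *ᵥ g)))
      -- (ζ R_kᵀ⌊q×⌋Φ₁₂ − ζΦ₅₂) · 0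
      + (ζ ⬝ᵥ (Rkᵀ *ᵥ crossProduct q (Φ12 *ᵥ (0 : Fin 3 → ℝ)))
        - ζ ⬝ᵥ (Φ52 *ᵥ (0 : Fin 3 → ℝ)))
      -- (−ζΦ₅₃) · (−⌊v₁×⌋ g)
      + (-(ζ ⬝ᵥ (Φ53 *ᵥ (-(crossProduct v1 g)))))
      -- (−ζΦ₅₄) · 0
      + (-(ζ ⬝ᵥ (Φ54 *ᵥ (0 : Fin 3 → ℝ))))
      -- (−ζ) · (−⌊p₁×⌋ g)
      + (-(ζ ⬝ᵥ (-(crossProduct p1 g))))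
      -- 0 · (−⌊p_f×⌋ g)
      + ((0 : Fin 3 → ℝ) ⬝ᵥ (-(crossProduct pf g)))
      -- ζ · (−⌊p_{a1}×⌋ g)
      + (ζ ⬝ᵥ (-(crossProduct pa1 g)))
      -- 0 · (−⌊p_{a2}×⌋ g)
      + ((0 : Fin 3 → ℝ) ⬝ᵥ (-(crossProduct pa2 g)))
    M = ζ ⬝ᵥ crossProduct (Rkᵀ *ᵥ q + pk - pa1) g ∧
      (ζ = (-(2 : ℝ)) • (Rkᵀ *ᵥ q + pk - pa1) → M = 0) := by
  intro M
  have hM : M = ζ ⬝ᵥ crossProduct (Rkᵀ *ᵥ q + pk - pa1) g := by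
    unfold M
    rw [show Φ11 *ᵥ (R1 *ᵥ g) = Rk *ᵥ g from by rw [Matrix.mulVec_mulVec, hΦ11],
      rot_cross Rk hRk, hΦ51, hΦ53]
    set u := Rkᵀ *ᵥ q with hu
    simp only [Matrix.mulVec_zero, map_zero, dotProduct_zero, zero_dotProduct,
      Matrix.smul_mulVec, Matrix.one_mulVec, add_zero, neg_zero]
    simp only [cross_apply, dotProduct, Fin.sum_univ_three, Pi.add_apply,
      Pi.sub_apply, Pi.smul_apply, Pi.neg_apply, smul_eq_mul, Matrix.cons_val_zero,
      Matrix.cons_val_one, Matrix.head_cons, Matrix.cons_val_two, Matrix.tail_cons]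
    ring
  refine ⟨hM, fun hζ => ?_⟩
  rw [hM, hζ, smul_dotProduct, dot_self_cross, smul_zero]
end

section
/- The set of transformations acting on the VIRO state by (R, p_I, v, p_f, p_{a1}, p_{a2}) ↦ (R R_z^T, R_z p_I + t, R_z v, R_z p_f + t, R_z p_{a1} + t, R_z p_{a2} + t), where R_z is any rotation about the gravity axis g and t ∈ R^3, leaves all camera reprojection measurements, robot-to-anchor ranging measurements, and anchor-to-anchor ranging measurements invariant. -/
open Matrix

/-- Euclidean norm on `ℝ³`. -/
noncomputable def nrm (v : Fin 3 → ℝ) : ℝ := Real.sqrt (v ⬝ᵥ v)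

lemma nrm_mulVec (Rz : Matrix (Fin 3) (Fin 3) ℝ) (h : Rzᵀ * Rz = 1)
    (v : Fin 3 → ℝ) : nrm (Rz *ᵥ v) = nrm v := by
  unfold nrm
  congr 1
  have key : (Rzᵀ * Rz) *ᵥ v ⬝ᵥ v = (Rz *ᵥ v) ⬝ᵥ (Rz *ᵥ v) := by
    rw [← mulVec_mulVec, dotProduct_comm, dotProduct_mulVec, vecMul_transpose]
  rw [← key, h, one_mulVec]

/-- The gauge transformation `(R, p_I, p_f, p_a) ↦ (R R_zᵀ, R_z p_I + t, R_z p_f + t,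
R_z p_a + t)` with `R_z ∈ SO(3)`, `R_z g = g` a rotation about gravity and `t ∈ ℝ³`,
leaves all camera reprojection measurements, robot-to-anchor ranging measurements, and
anchor-to-anchor ranging measurements invariant. -/
theorem stmt17 (g t pI pf pa1 pa2 q pCI : Fin 3 → ℝ) (bias : ℝ)
    (R RC Rz : Matrix (Fin 3) (Fin 3) ℝ)
    (hR : R ∈ Matrix.specialOrthogonalGroup (Fin 3) ℝ)
    (hRz : Rz ∈ Matrix.specialOrthogonalGroup (Fin 3) ℝ)
    (hg : Rz *ᵥ g = g)
    (π : (Fin 3 → ℝ) → (Fin 2 → ℝ)) :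
    -- camera reprojection measurement invariance
    π ((RC * (R * Rzᵀ)) *ᵥ ((Rz *ᵥ pf + t) - (Rz *ᵥ pI + t)) + pCI)
      = π ((RC * R) *ᵥ (pf - pI) + pCI) ∧
    -- robot-to-anchor ranging measurement invariance
    (∀ pa : Fin 3 → ℝ,
      nrm ((Rz *ᵥ pI + t) + (R * Rzᵀ)ᵀ *ᵥ q - (Rz *ᵥ pa + t)) + bias
        = nrm (pI + Rᵀ *ᵥ q - pa) + bias) ∧
    nrm ((Rz *ᵥ pa1 + t) - (Rz *ᵥ pa2 + t)) + bias = nrm (pa1 - pa2) + bias := by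
  have horth : Rz ∈ Matrix.orthogonalGroup (Fin 3) ℝ := hRz.1
  have h1 : Rzᵀ * Rz = 1 := by
    rw [Matrix.mem_orthogonalGroup_iff'] at horth
    simpa [Matrix.star_eq_conjTranspose] using horth
  refine ⟨?_, ?_, ?_⟩
  · congr 1
    have : (Rz *ᵥ pf + t) - (Rz *ᵥ pI + t) = Rz *ᵥ (pf - pI) := by
      rw [mulVec_sub]; abel
    rw [this, mulVec_mulVec]
    congr 2
    rw [mul_assoc, mul_assoc, h1, mul_one]
  · intro pa
    congr 1
    have : (Rz *ᵥ pI + t) + (R * Rzᵀ)ᵀ *ᵥ q - (Rz *ᵥ pa + t)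
        = Rz *ᵥ (pI + Rᵀ *ᵥ q - pa) := by
      rw [mulVec_sub, mulVec_add, mulVec_mulVec, transpose_mul, transpose_transpose]
      abel
    rw [this, nrm_mulVec Rz h1]
  · congr 1
    have : (Rz *ᵥ pa1 + t) - (Rz *ᵥ pa2 + t) = Rz *ᵥ (pa1 - pa2) := by
      rw [mulVec_sub]; abel
    rw [this, nrm_mulVec Rz h1]
end

section
/- The derivative at identity of the yaw-gauge orbit through the state (R₁, v₁, p₁, p_f, p_{a1}, p_{a2}), parameterized by rotation angle θ about g and translation t, spans exactly the 4-dimensional subspace given by the columns of N_o in Theorem 1: three translation columns (0,0,I,I,I,I blocks on the position-type states) and the column (R₁ g, −⌊v₁×⌋g, −⌊p₁×⌋g, −⌊p_f×⌋g, −⌊p_{a1}×⌋g, −⌊p_{a2}×⌋g). -/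
set_option maxHeartbeats 1000000

open Matrix NormedSpace Filter
open scoped Nat Topology


open Matrix

/-- Cross-product (skew-symmetric) matrix `⌊v×⌋`. -/
def cmat (v : Fin 3 → ℝ) : Matrix (Fin 3) (Fin 3) ℝ :=
  !![0, -v 2, v 1; v 2, 0, -v 0; -v 1, v 0, 0]

/-- Error-state space of the VIRO state `(δθ, ṽ, p̃, p̃_f, p̃_{a1}, p̃_{a2})`. -/
abbrev ErrState :=
  (Fin 3 → ℝ) × (Fin 3 → ℝ) × (Fin 3 → ℝ) × (Fin 3 → ℝ) × (Fin 3 → ℝ) × (Fin 3 → ℝ)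


lemma cmat_smul (a : ℝ) (v : Fin 3 → ℝ) : cmat (a • v) = a • cmat v := by
  ext i j; fin_cases i <;> fin_cases j <;> simp [cmat] <;> ring

lemma cmat_inj {v w : Fin 3 → ℝ} (h : cmat v = cmat w) : v = w := by
  funext i
  have h0 := congrFun (congrFun h 2) 1
  have h1 := congrFun (congrFun h 0) 2
  have h2 := congrFun (congrFun h 1) 0
  simp [cmat] at h0 h1 h2
  fin_cases i <;> assumption

lemma cmat_transpose (v : Fin 3 → ℝ) : (cmat v)ᵀ = -cmat v := by
  ext i j; fin_cases i <;> fin_cases j <;> simp [cmat]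

lemma cmat_cube (w : Fin 3 → ℝ) :
    cmat w * cmat w * cmat w = (-(w ⬝ᵥ w)) • cmat w := by
  ext i j
  fin_cases i <;> fin_cases j <;>
    simp [cmat, Matrix.mul_apply, Fin.sum_univ_three, dotProduct] <;> ring

lemma cmat_mulVec (v x : Fin 3 → ℝ) : cmat v *ᵥ x = crossProduct v x := by
  funext i
  fin_cases i <;>
    simp [cmat, Matrix.mulVec, dotProduct, Fin.sum_univ_three, crossProduct] <;> ring

lemma cmat_conj {R : Matrix (Fin 3) (Fin 3) ℝ}
    (hR : R ∈ Matrix.specialOrthogonalGroup (Fin 3) ℝ) (v : Fin 3 → ℝ) :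
    R * cmat v * Rᵀ = cmat (R *ᵥ v) := by
  obtain ⟨ho, hdet⟩ := Matrix.mem_specialOrthogonalGroup_iff.mp hR
  have h1 : R * Rᵀ = 1 := by
    have := Matrix.mem_orthogonalGroup_iff (Fin 3) ℝ |>.mp ho
    simpa using this
  have hadj : Rᵀ = Matrix.adjugate R := by
    calc Rᵀ = 1 * Rᵀ := (one_mul _).symm
    _ = (Matrix.adjugate R * R) * Rᵀ := by rw [Matrix.adjugate_mul, hdet, one_smul]
    _ = Matrix.adjugate R * (R * Rᵀ) := by rw [mul_assoc]
    _ = Matrix.adjugate R := by rw [h1, mul_one]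
  rw [Matrix.adjugate_fin_three] at hadj
  have h02 : R 2 0 = R 0 1 * R 1 2 - R 0 2 * R 1 1 := by
    have := congrFun (congrFun hadj 0) 2; simpa using this
  have h12 : R 2 1 = -(R 0 0 * R 1 2) + R 0 2 * R 1 0 := by
    have := congrFun (congrFun hadj 1) 2; simpa using this
  have h22 : R 2 2 = R 0 0 * R 1 1 - R 0 1 * R 1 0 := by
    have := congrFun (congrFun hadj 2) 2; simpa using this
  have h01 : R 1 0 = -(R 0 1 * R 2 2) + R 0 2 * R 2 1 := by
    have := congrFun (congrFun hadj 0) 1; simpa using this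
  have h11 : R 1 1 = R 0 0 * R 2 2 - R 0 2 * R 2 0 := by
    have := congrFun (congrFun hadj 1) 1; simpa using this
  have h21 : R 1 2 = -(R 0 0 * R 2 1) + R 0 1 * R 2 0 := by
    have := congrFun (congrFun hadj 2) 1; simpa using this
  have h00 : R 0 0 = R 1 1 * R 2 2 - R 1 2 * R 2 1 := by
    have := congrFun (congrFun hadj 0) 0; simpa using this
  have h10 : R 0 1 = -(R 1 0 * R 2 2) + R 1 2 * R 2 0 := by
    have := congrFun (congrFun hadj 1) 0; simpa using this
  have h20 : R 0 2 = R 1 0 * R 2 1 - R 1 1 * R 2 0 := by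
    have := congrFun (congrFun hadj 2) 0; simpa using this
  ext i j
  fin_cases i <;> fin_cases j <;>
    simp [cmat, Matrix.mul_apply, Matrix.mulVec, dotProduct, Fin.sum_univ_three]
  · ring
  · linear_combination v 0 * h02 + v 1 * h12 + v 2 * h22
  · linear_combination (-(v 0)) * h01 + (-(v 1)) * h11 + (-(v 2)) * h21
  · linear_combination (-(v 0)) * h02 + (-(v 1)) * h12 + (-(v 2)) * h22
  · ring
  · linear_combination v 0 * h00 + v 1 * h10 + v 2 * h20
  · linear_combination v 0 * h01 + v 1 * h11 + v 2 * h21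
  · linear_combination (-(v 0)) * h00 + (-(v 1)) * h10 + (-(v 2)) * h20
  · ring

lemma dotProduct_self_nonneg (w : Fin 3 → ℝ) : 0 ≤ w ⬝ᵥ w :=
  Finset.sum_nonneg fun i _ => mul_self_nonneg _

lemma sq_sqrt_dot (w : Fin 3 → ℝ) : Real.sqrt (w ⬝ᵥ w) ^ 2 = w ⬝ᵥ w :=
  Real.sq_sqrt (dotProduct_self_nonneg w)

lemma exp_cmat (w : Fin 3 → ℝ) (hw : w ≠ 0) :
    exp (cmat w) = 1 + (Real.sin (Real.sqrt (w ⬝ᵥ w)) / Real.sqrt (w ⬝ᵥ w)) • cmat w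
      + ((1 - Real.cos (Real.sqrt (w ⬝ᵥ w))) / (w ⬝ᵥ w)) • (cmat w * cmat w) := by
  set r := Real.sqrt (w ⬝ᵥ w) with hr
  have hq : 0 ≤ w ⬝ᵥ w := dotProduct_self_nonneg w
  have hqpos : 0 < w ⬝ᵥ w := by
    rcases lt_or_eq_of_le hq with h | h
    · exact h
    · exfalso; apply hw
      have : ∀ i, w i = 0 := by
        intro i
        have := Finset.sum_eq_zero_iff_of_nonneg (fun i _ => mul_self_nonneg (w i)) |>.mp h.symm
        have := this i (Finset.mem_univ i)
        nlinarith [this]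
      funext i; exact this i
  have hrpos : 0 < r := Real.sqrt_pos.mpr hqpos
  have hrne : r ≠ 0 := ne_of_gt hrpos
  have hr2 : r ^ 2 = w ⬝ᵥ w := sq_sqrt_dot w
  set X := cmat w with hX
  have hX3 : X * X * X = (-(r ^ 2)) • X := by rw [hr2]; exact cmat_cube w
  -- powers
  have hodd : ∀ n : ℕ, X ^ (2 * n + 1) = ((-1 : ℝ) ^ n * r ^ (2 * n)) • X := by
    intro n
    induction n with
    | zero => simp
    | succ n ih =>
      have : 2 * (n + 1) + 1 = (2 * n + 1) + 2 := by ring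
      rw [this, pow_add, ih, pow_two, smul_mul_assoc, ← mul_assoc, hX3]
      rw [smul_smul]
      congr 1
      ring
  have heven : ∀ n : ℕ, X ^ (2 * n + 2) = ((-1 : ℝ) ^ n * r ^ (2 * n)) • (X * X) := by
    intro n
    have : 2 * n + 2 = (2 * n + 1) + 1 := by ring
    rw [this, pow_add, hodd n, pow_one, smul_mul_assoc]
  -- series
  have hsin : HasSum (fun n : ℕ => (((2 * n + 1)! : ℝ)⁻¹) • X ^ (2 * n + 1))
      ((Real.sin r / r) • X) := by
    have h1 := (Real.hasSum_sin r).div_const r |>.smul_const X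
    convert h1 using 2 with n
    rw [hodd n, smul_smul]
    congr 1
    field_simp
    ring
  have hcos : HasSum (fun n : ℕ => (((2 * n + 2)! : ℝ)⁻¹) • X ^ (2 * n + 2))
      (((1 - Real.cos r) / (w ⬝ᵥ w)) • (X * X)) := by
    have h0 : HasSum (fun n : ℕ => (-1 : ℝ) ^ (n + 1) * r ^ (2 * (n + 1)) / (2 * (n + 1))!)
        (Real.cos r - 1) := by
      refine (hasSum_nat_add_iff (f := fun n : ℕ => (-1 : ℝ) ^ n * r ^ (2 * n) / (2 * n)!) 1).mpr ?_
      convert Real.hasSum_cos r using 1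
      · rfl
      simp
    have h1 : HasSum (fun n : ℕ => -((-1 : ℝ) ^ (n + 1) * r ^ (2 * (n + 1)) / (2 * (n + 1))!))
        (-(Real.cos r - 1)) := h0.neg
    have h2 := (h1.div_const (w ⬝ᵥ w)).smul_const (X * X)
    convert h2 using 2 with n
    · rw [heven n, smul_smul]
      congr 1
      rw [← hr2]
      have h2n2 : 2 * (n + 1) = 2 * n + 2 := by ring
      rw [h2n2]
      field_simp
      ring
    · congr 1
      ring
  have hgsum : HasSum (fun n : ℕ => (((n + 1)! : ℝ)⁻¹) • X ^ (n + 1))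
      ((Real.sin r / r) • X + ((1 - Real.cos r) / (w ⬝ᵥ w)) • (X * X)) := by
    refine HasSum.even_add_odd ?_ ?_
    · exact hsin
    · exact hcos
  have hfsum : HasSum (fun n : ℕ => ((n ! : ℝ)⁻¹) • X ^ n)
      (1 + ((Real.sin r / r) • X + ((1 - Real.cos r) / (w ⬝ᵥ w)) • (X * X))) := by
    have := (hasSum_nat_add_iff (f := fun n : ℕ => ((n ! : ℝ)⁻¹) • X ^ n) 1).mp hgsum
    convert this using 1
    · rfl
    simp [add_comm]
  rw [exp_eq_tsum ℝ]
  show (∑' n : ℕ, ((n ! : ℝ)⁻¹) • X ^ n) = _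
  rw [hfsum.tsum_eq]
  abel

lemma cmat_zero : cmat 0 = 0 := by
  ext i j; fin_cases i <;> fin_cases j <;> simp [cmat, Matrix.vecHead, Matrix.vecTail]

lemma cmat_eq_zero_iff {w : Fin 3 → ℝ} : cmat w = 0 ↔ w = 0 := by
  constructor
  · intro h; exact cmat_inj (h.trans cmat_zero.symm)
  · rintro rfl; exact cmat_zero

/-- skew part of the Rodrigues form -/
lemma skew_exp_cmat (w : Fin 3 → ℝ) :
    exp (cmat w) - (exp (cmat w))ᵀ
      = (2 * (Real.sin (Real.sqrt (w ⬝ᵥ w)) / Real.sqrt (w ⬝ᵥ w))) • cmat w := by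
  rcases eq_or_ne w 0 with rfl | hw
  · simp [cmat_zero]
  · rw [exp_cmat w hw]
    simp only [transpose_add, transpose_smul, transpose_one, transpose_mul, cmat_transpose]
    rw [neg_mul_neg]
    module

lemma exp_cmat_eq_imp {w v : Fin 3 → ℝ} (h : exp (cmat w) = exp (cmat v)) :
    (Real.sin (Real.sqrt (w ⬝ᵥ w)) / Real.sqrt (w ⬝ᵥ w)) • w
      = (Real.sin (Real.sqrt (v ⬝ᵥ v)) / Real.sqrt (v ⬝ᵥ v)) • v := by
  have h2 : (2 * (Real.sin (Real.sqrt (w ⬝ᵥ w)) / Real.sqrt (w ⬝ᵥ w))) • cmat w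
      = (2 * (Real.sin (Real.sqrt (v ⬝ᵥ v)) / Real.sqrt (v ⬝ᵥ v))) • cmat v := by
    rw [← skew_exp_cmat, ← skew_exp_cmat, h]
  have h3 : ((2:ℝ) * (Real.sin (Real.sqrt (w ⬝ᵥ w)) / Real.sqrt (w ⬝ᵥ w))) • w
      = ((2:ℝ) * (Real.sin (Real.sqrt (v ⬝ᵥ v)) / Real.sqrt (v ⬝ᵥ v))) • v :=
    cmat_inj (by rw [cmat_smul, cmat_smul]; exact h2)
  have h4 := congrArg (fun x : Fin 3 → ℝ => (2 : ℝ)⁻¹ • x) h3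
  simp only [smul_smul, ← mul_assoc, show (2:ℝ)⁻¹ * 2 = 1 from by norm_num, one_mul] at h4
  exact h4

lemma dotProduct_self_pos {w : Fin 3 → ℝ} (hw : w ≠ 0) : 0 < w ⬝ᵥ w := by
  rcases lt_or_eq_of_le (dotProduct_self_nonneg w) with h' | h'
  · exact h'
  · exfalso
    apply hw
    funext i
    have h0 := Finset.sum_eq_zero_iff_of_nonneg
      (fun i (_ : i ∈ Finset.univ) => mul_self_nonneg (w i)) |>.mp h'.symm i (Finset.mem_univ i)
    simp only [Pi.zero_apply]
    nlinarith [h0]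

lemma trace_cmat_sq (w : Fin 3 → ℝ) :
    Matrix.trace (cmat w * cmat w) = -2 * (w ⬝ᵥ w) := by
  simp [Matrix.trace, Matrix.mul_apply, cmat, Fin.sum_univ_three, dotProduct, Matrix.diag]
  ring

lemma exp_cmat_eq_one {w : Fin 3 → ℝ} (hw : w ≠ 0) (h : exp (cmat w) = 1) :
    Real.sin (Real.sqrt (w ⬝ᵥ w)) = 0 ∧ Real.cos (Real.sqrt (w ⬝ᵥ w)) = 1 := by
  set r := Real.sqrt (w ⬝ᵥ w) with hr
  have hqpos : 0 < w ⬝ᵥ w := dotProduct_self_pos hw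
  have hrne : r ≠ 0 := ne_of_gt (Real.sqrt_pos.mpr hqpos)
  -- sin r = 0 from the skew part
  have hskew := skew_exp_cmat w
  rw [h] at hskew
  simp only [transpose_one, sub_self] at hskew
  have hsin : Real.sin r = 0 := by
    have h1 : ((2 * (Real.sin r / r)) : ℝ) • w = 0 := by
      have := cmat_inj (v := (2 * (Real.sin r / r)) • w) (w := 0)
        (by rw [cmat_smul, cmat_zero]; exact hskew.symm)
      exact this
    rcases smul_eq_zero.mp h1 with h2 | h2
    · field_simp at h2
      linarith
    · exact absurd h2 hw
  refine ⟨hsin, ?_⟩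
  -- cos r = 1 from the trace
  have hexp := exp_cmat w hw
  rw [h, ← hr, hsin] at hexp
  have h2 : (0 : Matrix (Fin 3) (Fin 3) ℝ)
      = ((1 - Real.cos r) / (w ⬝ᵥ w)) • (cmat w * cmat w) := by
    have := hexp
    simp only [zero_div, zero_smul, add_zero] at this
    have h3 := congrArg (fun M => M - 1) this
    simpa using h3
  have h4 := congrArg Matrix.trace h2
  rw [Matrix.trace_smul, trace_cmat_sq, Matrix.trace_zero, smul_eq_mul] at h4
  have hq0 : (w ⬝ᵥ w) ≠ 0 := ne_of_gt hqpos
  obtain ⟨q, hqdef⟩ : ∃ q, q = w ⬝ᵥ w := ⟨_, rfl⟩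
  rw [← hqdef] at h4 hq0
  have h5 : (1 - Real.cos r) / q * (-2 * q) = -2 * (1 - Real.cos r) := by
    field_simp
  rw [h5] at h4
  linarith

noncomputable def sinc2 (t : ℝ) : ℝ := Real.sin (Real.sqrt t) / Real.sqrt t

lemma sinc2_sq_mul (x : ℝ) : sinc2 (x ^ 2) * x = Real.sin x := by
  unfold sinc2
  rcases le_or_gt 0 x with hx | hx
  · rw [Real.sqrt_sq hx]
    rcases eq_or_lt_of_le hx with rfl | hx'
    · simp
    · field_simp
  · rw [show x ^ 2 = (-x) ^ 2 by ring, Real.sqrt_sq (by linarith)]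
    rw [Real.sin_neg]
    field_simp
    rw [mul_div_assoc, div_self (ne_of_lt hx), mul_one]

lemma cmat_add (v w : Fin 3 → ℝ) : cmat (v + w) = cmat v + cmat w := by
  ext i j; fin_cases i <;> fin_cases j <;> simp [cmat] <;> ring

/-- linear map version of cmat -/
noncomputable def cmatL : (Fin 3 → ℝ) →ₗ[ℝ] Matrix (Fin 3) (Fin 3) ℝ where
  toFun := cmat
  map_add' := cmat_add
  map_smul' := fun a v => by simp [cmat_smul]

lemma dot_self_smul (c : ℝ) (b : Fin 3 → ℝ) : (c • b) ⬝ᵥ (c • b) = c ^ 2 * (b ⬝ᵥ b) := by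
  rw [smul_dotProduct, dotProduct_smul, smul_eq_mul, smul_eq_mul]; ring

lemma hasDerivAt_dot {f g : ℝ → Fin 3 → ℝ} {f' g' : Fin 3 → ℝ} {x : ℝ}
    (hf : HasDerivAt f f' x) (hg : HasDerivAt g g' x) :
    HasDerivAt (fun θ => f θ ⬝ᵥ g θ) (f' ⬝ᵥ g x + f x ⬝ᵥ g') x := by
  have hfi : ∀ i, HasDerivAt (fun θ => f θ i) (f' i) x := fun i => (hasDerivAt_pi.mp hf) i
  have hgi : ∀ i, HasDerivAt (fun θ => g θ i) (g' i) x := fun i => (hasDerivAt_pi.mp hg) i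
  have : HasDerivAt (fun θ => ∑ i : Fin 3, f θ i * g θ i)
      (∑ i : Fin 3, (f' i * g x i + f x i * g' i)) x :=
    HasDerivAt.fun_sum fun i _ => (hfi i).mul (hgi i)
  simpa [dotProduct, Finset.sum_add_distrib] using this

theorem eta_deriv (b : Fin 3 → ℝ) (hb : b ⬝ᵥ b = 1) (η : ℝ → Fin 3 → ℝ) (ηd : Fin 3 → ℝ)
    (hηd : HasDerivAt η ηd 0) (η0 : η 0 = 0 ∨ η 0 ≠ 0)
    (hE : ∀ θ, exp (cmat (η θ)) = exp (cmat (θ • b))) : ηd = b := by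
  have hbne : b ≠ 0 := by
    intro h; rw [h] at hb; simp at hb
  -- the key vector identity
  have hE' : ∀ θ : ℝ, sinc2 (η θ ⬝ᵥ η θ) • η θ = Real.sin θ • b := by
    intro θ
    have h1 := exp_cmat_eq_imp (hE θ)
    rw [dot_self_smul, hb, mul_one] at h1
    calc sinc2 (η θ ⬝ᵥ η θ) • η θ
        = (Real.sin (Real.sqrt (θ ^ 2)) / Real.sqrt (θ ^ 2)) • (θ • b) := h1
      _ = (sinc2 (θ ^ 2) * θ) • b := by rw [smul_smul]; rfl
      _ = Real.sin θ • b := by rw [sinc2_sq_mul]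
  rcases η0 with hη0 | hη0
  -- Case A : η 0 = 0
  · letI : SeminormedRing (Matrix (Fin 3) (Fin 3) ℝ) := Matrix.linftyOpSemiNormedRing
    letI : NormedRing (Matrix (Fin 3) (Fin 3) ℝ) := Matrix.linftyOpNormedRing
    letI : NormedAlgebra ℝ (Matrix (Fin 3) (Fin 3) ℝ) := Matrix.linftyOpNormedAlgebra
    have hc : HasDerivAt (fun θ => cmat (η θ)) (cmat ηd) 0 := by
      have hcl := (LinearMap.toContinuousLinearMap cmatL).hasFDerivAt (x := η 0)
      have h := hcl.comp_hasDerivAt 0 hηd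
      simp [cmatL, Function.comp_def] at h; exact h
    have h2 : HasFDerivAt (exp)
        (1 : Matrix (Fin 3) (Fin 3) ℝ →L[ℝ] Matrix (Fin 3) (Fin 3) ℝ) (cmat (η 0)) := by
      rw [show cmat (η 0) = 0 by rw [hη0, cmat_zero]]
      exact hasFDerivAt_exp_zero
    have hL : HasDerivAt (fun θ => exp (cmat (η θ))) (cmat ηd) 0 := by
      have h := h2.comp_hasDerivAt 0 hc
      simp [Function.comp_def] at h; exact h
    have hR : HasDerivAt (fun θ : ℝ => exp (cmat (θ • b))) (cmat b) 0 := by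
      have h3 : (fun θ : ℝ => exp (cmat (θ • b))) = fun θ : ℝ => exp (θ • cmat b) := by
        funext θ; rw [cmat_smul]
      rw [h3]
      have h := hasDerivAt_exp_smul_const (𝕂 := ℝ) (cmat b) (0 : ℝ)
      simp at h; exact h
    have heq : cmat ηd = cmat b := by
      have hfun : (fun θ => exp (cmat (η θ))) = fun θ : ℝ => exp (cmat (θ • b)) :=
        funext hE
      rw [hfun] at hL
      exact hL.unique hR
    exact cmat_inj heq
  -- Case B : η 0 ≠ 0
  · set q0 := η 0 ⬝ᵥ η 0 with hq0def
    have hq0pos : 0 < q0 := dotProduct_self_pos hη0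
    set r := Real.sqrt q0 with hrdef
    have hrpos : 0 < r := Real.sqrt_pos.mpr hq0pos
    have hrne : r ≠ 0 := ne_of_gt hrpos
    have hone : exp (cmat (η 0)) = 1 := by
      have := hE 0
      rw [zero_smul, cmat_zero, exp_zero] at this
      exact this
    obtain ⟨hsinr, hcosr⟩ := exp_cmat_eq_one hη0 hone
    rw [← hq0def, ← hrdef] at hsinr hcosr
    -- u and its derivative
    set u : ℝ → ℝ := fun θ => η θ ⬝ᵥ η θ with hudef
    set u' : ℝ := ηd ⬝ᵥ η 0 + η 0 ⬝ᵥ ηd with hu'def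
    have hu : HasDerivAt u u' 0 := hasDerivAt_dot hηd hηd
    -- ρ = sqrt ∘ u
    have hρ : HasDerivAt (fun θ => Real.sqrt (u θ)) (1 / (2 * r) * u') 0 := by
      have h1 := (Real.hasDerivAt_sqrt (ne_of_gt hq0pos)).comp 0 hu
      simpa [hrdef, Function.comp_def] using h1
    set ρ' : ℝ := 1 / (2 * r) * u' with hρ'def
    -- s = sin ∘ ρ
    have hs : HasDerivAt (fun θ => Real.sin (Real.sqrt (u θ))) ρ' 0 := by
      have h1 := (Real.hasDerivAt_sin (Real.sqrt (u 0))).comp 0 hρ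
      have h2 : Real.sqrt (u 0) = r := rfl
      rw [h2, hcosr, one_mul] at h1
      exact h1
    have hs0 : Real.sin (Real.sqrt (u 0)) = 0 := hsinr
    -- squared norms identity
    have hN : ∀ θ : ℝ, Real.sin (Real.sqrt (u θ)) ^ 2 = Real.sin θ ^ 2 := by
      intro θ
      rcases eq_or_ne (η θ) 0 with hz | hz
      · have h1 := hE' θ
        rw [hz, smul_zero] at h1
        have h2 : Real.sin θ = 0 := by
          rcases smul_eq_zero.mp h1.symm with h | h
          · exact h
          · exact absurd h hbne
        have h3 : u θ = 0 := by rw [hudef]; simp [hz]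
        rw [h3, h2, Real.sqrt_zero, Real.sin_zero]
      · have hqθ : 0 < u θ := dotProduct_self_pos hz
        have h1 := congrArg (fun x => x ⬝ᵥ x) (hE' θ)
        simp only [dot_self_smul, hb, mul_one] at h1
        have h2 : sinc2 (u θ) ^ 2 * u θ = Real.sin θ ^ 2 := h1
        have h3 : Real.sqrt (u θ) ^ 2 = u θ := Real.sq_sqrt (le_of_lt hqθ)
        have h4 : Real.sqrt (u θ) ≠ 0 := by positivity
        unfold sinc2 at h2
        field_simp at h2
        rw [h3, mul_comm (u θ)] at h2
        exact mul_right_cancel₀ hqθ.ne' h2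
    -- derivative of the slope squared: ρ'^2 = 1
    have hρ'sq : ρ' ^ 2 = 1 := by
      have l1 : Tendsto (fun θ : ℝ => Real.sin (Real.sqrt (u θ)) / θ) (𝓝[≠] 0) (𝓝 ρ') := by
        have := hasDerivAt_iff_tendsto_slope.mp hs
        have heq : (slope (fun θ => Real.sin (Real.sqrt (u θ))) 0)
            = fun θ : ℝ => Real.sin (Real.sqrt (u θ)) / θ := by
          funext θ
          rw [slope_def_field]
          rw [hs0]
          simp [div_eq_inv_mul]
        rwa [heq] at this
      have l2 : Tendsto (fun θ : ℝ => Real.sin θ / θ) (𝓝[≠] 0) (𝓝 1) := by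
        have := hasDerivAt_iff_tendsto_slope.mp (Real.hasDerivAt_sin 0)
        rw [Real.cos_zero] at this
        have heq : (slope Real.sin 0) = fun θ : ℝ => Real.sin θ / θ := by
          funext θ
          rw [slope_def_field, Real.sin_zero]
          simp [div_eq_inv_mul]
        rwa [heq] at this
      have l3 : Tendsto (fun θ : ℝ => (Real.sin (Real.sqrt (u θ)) / θ) ^ 2) (𝓝[≠] 0)
          (𝓝 (ρ' ^ 2)) := l1.pow 2
      have l4 : Tendsto (fun θ : ℝ => (Real.sin (Real.sqrt (u θ)) / θ) ^ 2) (𝓝[≠] 0)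
          (𝓝 (1 ^ 2)) := by
        have l5 := l2.pow 2
        apply l5.congr
        intro θ
        rw [div_pow, div_pow, hN θ]
      have := tendsto_nhds_unique l3 l4
      rw [one_pow] at this
      exact this
    have hρ'ne : ρ' ≠ 0 := by
      intro h; rw [h] at hρ'sq; simp at hρ'sq
    have hu'ne : u' ≠ 0 := by
      intro h
      rw [hρ'def, h, mul_zero] at hρ'ne
      exact hρ'ne rfl
    -- derivative of E' at 0 : η 0 is a multiple of b
    have hF : HasDerivAt sinc2 (1 / (2 * q0)) q0 := by
      have hnum : HasDerivAt (fun t => Real.sin (Real.sqrt t)) (1 / (2 * r)) q0 := by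
        have h1 := (Real.hasDerivAt_sin (Real.sqrt q0)).comp q0
          (Real.hasDerivAt_sqrt (ne_of_gt hq0pos))
        rw [← hrdef, hcosr, one_mul] at h1
        exact h1
      have hden : HasDerivAt (fun t => Real.sqrt t) (1 / (2 * r)) q0 := by
        have := Real.hasDerivAt_sqrt (ne_of_gt hq0pos)
        rwa [← hrdef] at this
      have hdiv := hnum.div hden (by rw [← hrdef]; exact hrne)
      have : (1 / (2 * r) * Real.sqrt q0 - Real.sin (Real.sqrt q0) * (1 / (2 * r)))
          / (Real.sqrt q0) ^ 2 = 1 / (2 * q0) := by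
        rw [← hrdef, hsinr]
        have : r ^ 2 = q0 := Real.sq_sqrt (le_of_lt hq0pos)
        field_simp
        nlinarith [this]
      rw [this] at hdiv
      exact hdiv
    have hsincq0 : sinc2 q0 = 0 := by
      unfold sinc2; rw [← hrdef, hsinr, zero_div]
    have hLd0 := ((hF.comp (0:ℝ) hu).smul hηd)
    simp only [Function.comp] at hLd0
    have hsinc0 : sinc2 (u 0) = 0 := hsincq0
    rw [hsinc0, zero_smul, zero_add] at hLd0
    have hLd : HasDerivAt (fun θ => sinc2 (u θ) • η θ) ((1 / (2 * q0) * u') • η 0) 0 := hLd0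
    have hRd : HasDerivAt (fun θ : ℝ => Real.sin θ • b) b 0 := by
      have := (Real.hasDerivAt_sin 0).smul_const b
      rwa [Real.cos_zero, one_smul] at this
    have hfun : (fun θ => sinc2 (u θ) • η θ) = (fun θ : ℝ => Real.sin θ • b) :=
      funext fun θ => hE' θ
    have hη0b : (1 / (2 * q0) * u') • η 0 = b := by
      rw [hfun] at hLd
      exact hLd.unique hRd
    -- collinearity eventually
    set lam : ℝ → ℝ := fun θ => η θ ⬝ᵥ b with hlamdef
    have hlam0 : η 0 = lam 0 • b := by
      have h2 : (1 / (2 * q0) * u') ≠ 0 := by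
        intro h
        rw [h, zero_smul] at hη0b
        exact hbne hη0b.symm
      have h1 : η 0 = (1 / (2 * q0) * u')⁻¹ • b := by
        rw [← hη0b, smul_smul, inv_mul_cancel₀ h2, one_smul]
      have h3 : lam 0 = (1 / (2 * q0) * u')⁻¹ := by
        show η 0 ⬝ᵥ b = _
        rw [h1, smul_dotProduct, smul_eq_mul, hb, mul_one]
      rw [h3, h1]
    have hcol : ∀ᶠ θ in 𝓝 (0:ℝ), η θ = lam θ • b := by
      have hsne : ∀ᶠ θ in 𝓝[≠] (0:ℝ), Real.sin (Real.sqrt (u θ)) / θ ≠ 0 := by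
        have l1 : Tendsto (fun θ : ℝ => Real.sin (Real.sqrt (u θ)) / θ) (𝓝[≠] 0) (𝓝 ρ') := by
          have := hasDerivAt_iff_tendsto_slope.mp hs
          have heq : (slope (fun θ => Real.sin (Real.sqrt (u θ))) 0)
              = fun θ : ℝ => Real.sin (Real.sqrt (u θ)) / θ := by
            funext θ
            rw [slope_def_field, hs0]
            simp [div_eq_inv_mul]
          rwa [heq] at this
        exact l1.eventually_ne hρ'ne
      have hP : ∀ᶠ θ in 𝓝[≠] (0:ℝ), η θ = lam θ • b := by
        filter_upwards [hsne] with θ hθ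
        have hsθ : Real.sin (Real.sqrt (u θ)) ≠ 0 := by
          intro h; rw [h, zero_div] at hθ; exact hθ rfl
        have hηθ : η θ ≠ 0 := by
          intro h
          rw [hudef] at hsθ
          simp only at hsθ
          rw [h] at hsθ
          simp at hsθ
        have huθ : 0 < u θ := dotProduct_self_pos hηθ
        have hsincne : sinc2 (u θ) ≠ 0 := by
          unfold sinc2
          apply div_ne_zero hsθ
          positivity
        have h1 : η θ = (sinc2 (u θ))⁻¹ • (Real.sin θ • b) := by
          rw [← hE' θ, smul_smul, inv_mul_cancel₀ hsincne, one_smul]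
        have h2 : lam θ = (sinc2 (u θ))⁻¹ * Real.sin θ := by
          rw [hlamdef]
          simp only [h1, smul_smul, smul_dotProduct, smul_eq_mul, hb, mul_one]
        rw [h1, h2, smul_smul]
      rw [eventually_nhdsWithin_iff] at hP
      filter_upwards [hP] with θ hθ
      by_cases h0 : θ = 0
      · subst h0; exact hlam0
      · exact hθ (Set.mem_compl_singleton_iff.mpr h0)
    -- scalar equation : sin (lam θ) = sin θ eventually
    have hsinlam : ∀ᶠ θ in 𝓝 (0:ℝ), Real.sin (lam θ) = Real.sin θ := by
      filter_upwards [hcol] with θ hθ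
      have h1 := hE' θ
      rw [hθ] at h1
      rw [dot_self_smul, hb, mul_one, smul_smul] at h1
      have h2 : sinc2 (lam θ ^ 2) * lam θ = Real.sin θ := by
        have h3 : (sinc2 (lam θ ^ 2) * lam θ) • b = Real.sin θ • b := h1
        have h4 := congrArg (fun x => x ⬝ᵥ b) h3
        simpa [smul_dotProduct, smul_eq_mul, hb] using h4
      rw [← h2, sinc2_sq_mul]
    -- lam derivative
    have hlam' : HasDerivAt lam (ηd ⬝ᵥ b) 0 := by
      have h := hasDerivAt_dot hηd (hasDerivAt_const (0:ℝ) b)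
      rw [dotProduct_zero, add_zero] at h
      exact h
    -- cos (lam 0) = 1
    have hlam0sq : lam 0 ^ 2 = q0 := by
      have h1 : q0 = (lam 0 • b) ⬝ᵥ (lam 0 • b) := by rw [← hlam0]
      rw [dot_self_smul, hb, mul_one] at h1
      exact h1.symm
    have hcoslam0 : Real.cos (lam 0) = 1 := by
      have : lam 0 = r ∨ lam 0 = -r := by
        have hr2 : r ^ 2 = q0 := Real.sq_sqrt (le_of_lt hq0pos)
        have hfac : (lam 0 - r) * (lam 0 + r) = 0 := by nlinarith [hlam0sq, hr2]
        rcases mul_eq_zero.mp hfac with h | h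
        · left; linarith
        · right; linarith
      rcases this with h | h
      · rw [h]; exact hcosr
      · rw [h, Real.cos_neg]; exact hcosr
    -- conclude
    have hd1 : HasDerivAt (fun θ => Real.sin (lam θ)) (Real.cos (lam 0) * (ηd ⬝ᵥ b)) 0 :=
      (Real.hasDerivAt_sin (lam 0)).comp 0 hlam'
    have hd2 : HasDerivAt (fun θ => Real.sin (lam θ)) 1 0 := by
      have h1 : HasDerivAt Real.sin 1 0 := by
        have := Real.hasDerivAt_sin 0
        rwa [Real.cos_zero] at this
      exact h1.congr_of_eventuallyEq hsinlam
    have hdotb : ηd ⬝ᵥ b = 1 := by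
      have := hd1.unique hd2
      rw [hcoslam0, one_mul] at this
      exact this
    have hfinal : HasDerivAt η ((ηd ⬝ᵥ b) • b) 0 := by
      have h1 : HasDerivAt (fun θ => lam θ • b) ((ηd ⬝ᵥ b) • b) 0 := hlam'.smul_const b
      exact h1.congr_of_eventuallyEq hcol
    have := hηd.unique hfinal
    rw [hdotb, one_smul] at this
    exact this

/-- mulVec with fixed vector, as a linear map in the matrix -/
noncomputable def mulVecL (v : Fin 3 → ℝ) : Matrix (Fin 3) (Fin 3) ℝ →ₗ[ℝ] (Fin 3 → ℝ) where
  toFun M := M *ᵥ v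
  map_add' A B := Matrix.add_mulVec A B v
  map_smul' a A := by simp [Matrix.smul_mulVec]

section RzFacts

variable (g : Fin 3 → ℝ) (hgne : g ≠ 0)
  (Rz : ℝ → Matrix (Fin 3) (Fin 3) ℝ)
  (hRz : ∀ θ, Rz θ = NormedSpace.exp (θ • ((Real.sqrt (g ⬝ᵥ g))⁻¹ • cmat g)))

include hRz in
/-- `Rz θ = exp (θ • cmat g')` for the unit vector `g'`. -/
lemma Rz_eq (θ : ℝ) :
    Rz θ = exp (θ • cmat ((Real.sqrt (g ⬝ᵥ g))⁻¹ • g)) := by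
  rw [hRz θ, cmat_smul]

include hRz in
lemma Rz_deriv (v : Fin 3 → ℝ) :
    HasDerivAt (fun θ => Rz θ *ᵥ v) ((Real.sqrt (g ⬝ᵥ g))⁻¹ • crossProduct g v) 0 := by
  letI : SeminormedRing (Matrix (Fin 3) (Fin 3) ℝ) := Matrix.linftyOpSemiNormedRing
  letI : NormedRing (Matrix (Fin 3) (Fin 3) ℝ) := Matrix.linftyOpNormedRing
  letI : NormedAlgebra ℝ (Matrix (Fin 3) (Fin 3) ℝ) := Matrix.linftyOpNormedAlgebra
  set X := cmat ((Real.sqrt (g ⬝ᵥ g))⁻¹ • g) with hX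
  have h1 : HasDerivAt (fun θ : ℝ => exp (θ • X)) X 0 := by
    have h := hasDerivAt_exp_smul_const (𝕂 := ℝ) X (0 : ℝ)
    simp at h; exact h
  have h2 := ((LinearMap.toContinuousLinearMap (mulVecL v)).hasFDerivAt).comp_hasDerivAt 0 h1
  have h3 : HasDerivAt (fun θ : ℝ => exp (θ • X) *ᵥ v) (X *ᵥ v) 0 := by
    simp [mulVecL, Function.comp_def] at h2; exact h2
  have h4 : (fun θ => Rz θ *ᵥ v) = fun θ : ℝ => exp (θ • X) *ᵥ v := by
    funext θ; rw [Rz_eq g Rz hRz θ]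
  rw [h4]
  have h5 : X *ᵥ v = (Real.sqrt (g ⬝ᵥ g))⁻¹ • crossProduct g v := by
    rw [hX, cmat_smul, Matrix.smul_mulVec, cmat_mulVec]
  rwa [h5] at h3

end RzFacts

lemma conj_reduce (g : Fin 3 → ℝ) (hgne : g ≠ 0)
    (R1 : Matrix (Fin 3) (Fin 3) ℝ)
    (hR1 : R1 ∈ Matrix.specialOrthogonalGroup (Fin 3) ℝ)
    (Rz : ℝ → Matrix (Fin 3) (Fin 3) ℝ)
    (hRz : ∀ θ, Rz θ = NormedSpace.exp (θ • ((Real.sqrt (g ⬝ᵥ g))⁻¹ • cmat g)))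
    (η : ℝ → (Fin 3 → ℝ))
    (hη : ∀ θ, NormedSpace.exp (cmat (η θ)) * (R1 * (Rz θ)ᵀ) = R1) :
    (∀ θ : ℝ, exp (cmat (η θ))
        = exp (cmat (θ • ((Real.sqrt (g ⬝ᵥ g))⁻¹ • (R1 *ᵥ g)))))
      ∧ ((Real.sqrt (g ⬝ᵥ g))⁻¹ • (R1 *ᵥ g)) ⬝ᵥ ((Real.sqrt (g ⬝ᵥ g))⁻¹ • (R1 *ᵥ g)) = 1 := by
  obtain ⟨ho, hdet⟩ := Matrix.mem_specialOrthogonalGroup_iff.mp hR1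
  have hqpos : 0 < g ⬝ᵥ g := dotProduct_self_pos hgne
  have hcpos : 0 < Real.sqrt (g ⬝ᵥ g) := Real.sqrt_pos.mpr hqpos
  have hc2 : Real.sqrt (g ⬝ᵥ g) ^ 2 = g ⬝ᵥ g := Real.sq_sqrt (le_of_lt hqpos)
  have hR1T : R1 * R1ᵀ = 1 := by
    have h := (Matrix.mem_orthogonalGroup_iff (Fin 3) ℝ).mp ho
    simpa [Matrix.star_eq_conjTranspose] using h
  have hR1T' : R1ᵀ * R1 = 1 := by
    rw [mul_eq_one_comm] at hR1T
    exact hR1T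
  have hb : (((Real.sqrt (g ⬝ᵥ g))⁻¹ • (R1 *ᵥ g)) ⬝ᵥ ((Real.sqrt (g ⬝ᵥ g))⁻¹ • (R1 *ᵥ g))) = 1 := by
    have h1 : (R1 *ᵥ g) ⬝ᵥ (R1 *ᵥ g) = g ⬝ᵥ g := by
      rw [Matrix.dotProduct_mulVec, Matrix.vecMul_mulVec, hR1T', Matrix.vecMul_one]
    rw [smul_dotProduct, dotProduct_smul, h1, smul_eq_mul, smul_eq_mul]
    have h2 : (Real.sqrt (g ⬝ᵥ g))⁻¹ * Real.sqrt (g ⬝ᵥ g) = 1 :=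
      inv_mul_cancel₀ (ne_of_gt hcpos)
    linear_combination (-(((Real.sqrt (g ⬝ᵥ g))⁻¹) ^ 2)) * hc2
      + ((Real.sqrt (g ⬝ᵥ g))⁻¹ * Real.sqrt (g ⬝ᵥ g) + 1) * h2
  refine ⟨fun θ => ?_, hb⟩
  have hRzT : (Rz θ)ᵀ = exp (-(θ • cmat ((Real.sqrt (g ⬝ᵥ g))⁻¹ • g))) := by
    rw [Rz_eq g Rz hRz θ, ← Matrix.exp_transpose]
    congr 1
    rw [Matrix.transpose_smul, cmat_transpose, smul_neg]
  have hinv : (Rz θ)ᵀ * Rz θ = 1 := by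
    rw [hRzT, Rz_eq g Rz hRz θ]
    rw [← Matrix.exp_add_of_commute (-(θ • cmat ((Real.sqrt (g ⬝ᵥ g))⁻¹ • g))) _ (Commute.neg_left rfl)]
    rw [neg_add_cancel, exp_zero]
  have hE1 : exp (cmat (η θ)) = R1 * Rz θ * R1ᵀ := by
    have h1 := hη θ
    have h2 : exp (cmat (η θ)) * (R1 * (Rz θ)ᵀ) * (Rz θ * R1ᵀ) = R1 * (Rz θ * R1ᵀ) := by
      rw [h1]
    calc exp (cmat (η θ))
        = exp (cmat (η θ)) * (R1 * ((Rz θ)ᵀ * Rz θ) * R1ᵀ) := by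
          rw [hinv, mul_one, hR1T, mul_one]
      _ = exp (cmat (η θ)) * (R1 * (Rz θ)ᵀ) * (Rz θ * R1ᵀ) := by
          noncomm_ring
      _ = R1 * (Rz θ * R1ᵀ) := h2
      _ = R1 * Rz θ * R1ᵀ := by rw [mul_assoc]
  have hunit : IsUnit R1 := by
    rw [Matrix.isUnit_iff_isUnit_det, hdet]
    exact isUnit_one
  have hR1inv : R1⁻¹ = R1ᵀ := Matrix.inv_eq_right_inv hR1T
  rw [hE1, Rz_eq g Rz hRz θ, ← hR1inv, ← Matrix.exp_conj R1 _ hunit, hR1inv]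
  congr 1
  rw [Matrix.mul_smul, Matrix.smul_mul, cmat_conj hR1 _, cmat_smul]
  congr 1
  rw [Matrix.mulVec_smul]

/-- the translation part, as a linear map -/
noncomputable def Tmap : (Fin 3 → ℝ) →ₗ[ℝ] ErrState :=
  (0 : (Fin 3 → ℝ) →ₗ[ℝ] (Fin 3 → ℝ)).prod
    ((0 : (Fin 3 → ℝ) →ₗ[ℝ] (Fin 3 → ℝ)).prod
      (LinearMap.id.prod (LinearMap.id.prod (LinearMap.id.prod LinearMap.id))))


/-- The derivative at the identity of the yaw-and-translation gauge orbit through the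
state `(R₁, v₁, p₁, p_f, p_{a1}, p_{a2})` — the orbit acting by
`(R, v, p, ·) ↦ (R R_z(θ)ᵀ, R_z(θ) v, R_z(θ) p + t, …)` with
`R_z(θ) = exp(θ ⌊g×⌋ / ‖g‖)`, and the orientation error `δθ` defined by
`exp(⌊δθ×⌋) R̂ = R` (i.e. `exp(⌊η(θ)×⌋) (R₁ R_z(θ)ᵀ) = R₁`) — spans exactly the
4-dimensional subspace given by the columns of `N_o` of Theorem 1: the three
translation columns `(0, 0, I, I, I, I)` and the column
`(R₁ g, −⌊v₁×⌋g, −⌊p₁×⌋g, −⌊p_f×⌋g, −⌊p_{a1}×⌋g, −⌊p_{a2}×⌋g)`. -/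
theorem stmt19
    (g v1 p1 pf pa1 pa2 : Fin 3 → ℝ) (hgne : g ≠ 0)
    (R1 : Matrix (Fin 3) (Fin 3) ℝ)
    (hR1 : R1 ∈ Matrix.specialOrthogonalGroup (Fin 3) ℝ)
    (Rz : ℝ → Matrix (Fin 3) (Fin 3) ℝ)
    (hRz : ∀ θ, Rz θ = NormedSpace.exp (θ • ((Real.sqrt (g ⬝ᵥ g))⁻¹ • cmat g)))
    (η : ℝ → (Fin 3 → ℝ))
    (hη : ∀ θ, NormedSpace.exp (cmat (η θ)) * (R1 * (Rz θ)ᵀ) = R1)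
    (ηd : Fin 3 → ℝ) (hηd : HasDerivAt η ηd 0) :
    let N₂ : ErrState :=
      (R1 *ᵥ g, -(crossProduct v1 g), -(crossProduct p1 g),
       -(crossProduct pf g), -(crossProduct pa1 g), -(crossProduct pa2 g))
    let Ssp : Submodule ℝ ErrState :=
      Submodule.span ℝ (insert N₂ {w : ErrState | ∃ t : Fin 3 → ℝ, w = (0, 0, t, t, t, t)})
    Set.range (fun a : ℝ × (Fin 3 → ℝ) =>
      ((a.1 • ηd,
        a.1 • deriv (fun θ => Rz θ *ᵥ v1) 0,
        a.1 • deriv (fun θ => Rz θ *ᵥ p1) 0 + a.2,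
        a.1 • deriv (fun θ => Rz θ *ᵥ pf) 0 + a.2,
        a.1 • deriv (fun θ => Rz θ *ᵥ pa1) 0 + a.2,
        a.1 • deriv (fun θ => Rz θ *ᵥ pa2) 0 + a.2) : ErrState))
      = (Ssp : Set ErrState) ∧
    Module.finrank ℝ Ssp = 4 := by
  intro N₂ Ssp
  obtain ⟨hE, hb⟩ := conj_reduce g hgne R1 hR1 Rz hRz η hη
  set c : ℝ := Real.sqrt (g ⬝ᵥ g) with hc
  have hcpos : 0 < c := Real.sqrt_pos.mpr (dotProduct_self_pos hgne)
  have hcne : c ≠ 0 := ne_of_gt hcpos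
  have hηdval : ηd = c⁻¹ • (R1 *ᵥ g) :=
    eta_deriv _ hb η ηd hηd (eq_or_ne (η 0) 0) hE
  have hder : ∀ v : Fin 3 → ℝ,
      deriv (fun θ => Rz θ *ᵥ v) 0 = c⁻¹ • crossProduct g v := fun v =>
    (Rz_deriv g Rz hRz v).deriv
  have hcross : ∀ v : Fin 3 → ℝ, (c⁻¹ • crossProduct g v : Fin 3 → ℝ)
      = c⁻¹ • -(crossProduct v g) := by
    intro v
    rw [cross_anticomm]
  -- the range as a linear map
  set L : (ℝ × (Fin 3 → ℝ)) →ₗ[ℝ] ErrState :=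
    LinearMap.coprod (LinearMap.toSpanSingleton ℝ ErrState (c⁻¹ • N₂)) Tmap with hL
  have hN₂1 : N₂.1 = R1 *ᵥ g := rfl
  have hR1gne : R1 *ᵥ g ≠ 0 := by
    intro h
    apply hgne
    obtain ⟨ho, hdet⟩ := Matrix.mem_specialOrthogonalGroup_iff.mp hR1
    have hR1T : R1 * R1ᵀ = 1 := by
      have h' := (Matrix.mem_orthogonalGroup_iff (Fin 3) ℝ).mp ho
      simpa [Matrix.star_eq_conjTranspose] using h'
    have hR1T' : R1ᵀ * R1 = 1 := by rwa [mul_eq_one_comm] at hR1T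
    calc g = (R1ᵀ * R1) *ᵥ g := by rw [hR1T', Matrix.one_mulVec]
    _ = R1ᵀ *ᵥ (R1 *ᵥ g) := by rw [Matrix.mulVec_mulVec]
    _ = 0 := by rw [h, Matrix.mulVec_zero]
  -- function = L
  have hfun : (fun a : ℝ × (Fin 3 → ℝ) =>
      ((a.1 • ηd,
        a.1 • deriv (fun θ => Rz θ *ᵥ v1) 0,
        a.1 • deriv (fun θ => Rz θ *ᵥ p1) 0 + a.2,
        a.1 • deriv (fun θ => Rz θ *ᵥ pf) 0 + a.2,
        a.1 • deriv (fun θ => Rz θ *ᵥ pa1) 0 + a.2,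
        a.1 • deriv (fun θ => Rz θ *ᵥ pa2) 0 + a.2) : ErrState)) = fun a => L a := by
    funext a
    simp only [hL, LinearMap.coprod_apply, LinearMap.toSpanSingleton_apply, Tmap,
      LinearMap.prod_apply, Pi.prod, LinearMap.zero_apply, LinearMap.id_apply]
    rw [hηdval, hder v1, hder p1, hder pf, hder pa1, hder pa2,
      hcross v1, hcross p1, hcross pf, hcross pa1, hcross pa2]
    show _ = (a.1 • (c⁻¹ • N₂.1) + 0, a.1 • (c⁻¹ • N₂.2.1) + 0,
      a.1 • (c⁻¹ • N₂.2.2.1) + a.2, a.1 • (c⁻¹ • N₂.2.2.2.1) + a.2,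
      a.1 • (c⁻¹ • N₂.2.2.2.2.1) + a.2, a.1 • (c⁻¹ • N₂.2.2.2.2.2) + a.2)
    simp only [add_zero]
    rfl
  -- range L = Ssp
  have hrange : LinearMap.range L = Ssp := by
    apply le_antisymm
    · rintro x ⟨a, rfl⟩
      have h1 : L a = a.1 • (c⁻¹ • N₂) + Tmap a.2 := rfl
      rw [h1]
      apply Submodule.add_mem
      · apply Submodule.smul_mem
        apply Submodule.smul_mem
        exact Submodule.subset_span (Set.mem_insert _ _)
      · apply Submodule.subset_span
        right
        exact ⟨a.2, rfl⟩
    · rw [Submodule.span_le]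
      rintro x (rfl | ⟨t, rfl⟩)
      · exact ⟨(c, 0), by
          show c • (c⁻¹ • N₂) + Tmap 0 = N₂
          rw [smul_smul, mul_inv_cancel₀ hcne, one_smul, map_zero, add_zero]⟩
      · exact ⟨(0, t), by
          show (0:ℝ) • (c⁻¹ • N₂) + Tmap t = (0, 0, t, t, t, t)
          rw [zero_smul, zero_add]
          rfl⟩
  have hinj : Function.Injective L := by
    rw [← LinearMap.ker_eq_bot]
    rw [Submodule.eq_bot_iff]
    rintro ⟨s, t⟩ hx
    rw [LinearMap.mem_ker] at hx
    have h1 : L (s, t) = (s • (c⁻¹ • N₂.1) + 0, s • (c⁻¹ • N₂.2.1) + 0,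
        s • (c⁻¹ • N₂.2.2.1) + t, s • (c⁻¹ • N₂.2.2.2.1) + t,
        s • (c⁻¹ • N₂.2.2.2.2.1) + t, s • (c⁻¹ • N₂.2.2.2.2.2) + t) := by
      show (LinearMap.toSpanSingleton ℝ ErrState (c⁻¹ • N₂)) s + Tmap t = _
      rw [LinearMap.toSpanSingleton_apply]
      rfl
    rw [h1] at hx
    have h2 : s • (c⁻¹ • N₂.1) + 0 = 0 := congrArg Prod.fst hx
    rw [add_zero] at h2
    have hs : s = 0 := by
      rw [smul_smul] at h2
      rcases smul_eq_zero.mp h2 with h | h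
      · rcases mul_eq_zero.mp h with h' | h'
        · exact h'
        · exact absurd h' (inv_ne_zero hcne)
      · exact absurd h hR1gne
    have h3 : s • (c⁻¹ • N₂.2.2.1) + t = 0 := congrArg (fun w => w.2.2.1) hx
    rw [hs, zero_smul, zero_add] at h3
    rw [Prod.mk.injEq]
    exact ⟨hs, h3⟩
  constructor
  · rw [hfun]
    rw [← hrange]
    rw [LinearMap.coe_range]
  · rw [← hrange, LinearMap.finrank_range_of_inj hinj,
      Module.finrank_prod, Module.finrank_self, Module.finrank_fin_fun]
end
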